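/- For n ≡ 1 or 2 (mod 4), a monotone rank-(n-1) partial injection α on {1,...,n} lies in the alternating inverse monoid if and only if its reverse transformation (the unique monotone partial injection with the same domain and image but opposite orientation) also lies in the alternating inverse monoid. -/

import Mathlib

/-- Partial transformations on `Fin n`, represented as `Option`-valued maps. -/
abbrev PT (n : ℕ) := Fin n → Option (Fin n)

/-- Left-to-right composition of partial maps: `x (pcomp f g) = (x f) g`. -/
def pcomp {n : ℕ} (f g : PT n) : PT n := fun x => (f x).bind g

/-- The identity partial map. -/
def pid (n : ℕ) : PT n := fun x => some x

instance PTMonoid (n : ℕ) : Monoid (PT n) where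
  mul := pcomp
  one := pid n
  mul_assoc f g h := funext fun x => by
    show ((f x).bind g).bind h = (f x).bind fun y => (g y).bind h
    cases f x <;> rfl
  one_mul f := rfl
  mul_one f := funext fun x => by
    show (f x).bind (fun y => some y) = f x
    cases f x <;> rfl

/-- `f` is injective on its domain. -/
def pInj {n : ℕ} (f : PT n) : Prop := ∀ x y a, f x = some a → f y = some a → x = y

/-- The domain of a partial map. -/
def pDom {n : ℕ} (f : PT n) : Finset (Fin n) := Finset.univ.filter fun x => (f x).isSome

/-- The image of a partial map. -/
def pIm {n : ℕ} (f : PT n) : Finset (Fin n) := Finset.univ.filter fun b => ∃ x, f x = some b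

/-- The rank of a partial map is the size of its domain. -/
def prank {n : ℕ} (f : PT n) : ℕ := (pDom f).card

/-- Order-preserving partial maps. -/
def orderPres {n : ℕ} (f : PT n) : Prop :=
  ∀ x y a b, f x = some a → f y = some b → x ≤ y → a ≤ b

/-- Order-reversing partial maps. -/
def orderRev {n : ℕ} (f : PT n) : Prop :=
  ∀ x y a b, f x = some a → f y = some b → x ≤ y → b ≤ a

/-- Monotone partial maps. -/
def isMonotonePT {n : ℕ} (f : PT n) : Prop := orderPres f ∨ orderRev f

/-- The permutation `σ` extends the partial map `f`. -/
def extendsTo {n : ℕ} (σ : Equiv.Perm (Fin n)) (f : PT n) : Prop :=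
  ∀ x a, f x = some a → σ x = a

/-- Membership in the alternating inverse monoid `AI_n`: an injective partial map of
rank `≤ n - 2`, or one that extends to an even permutation. -/
def inAI {n : ℕ} (f : PT n) : Prop :=
  pInj f ∧ (prank f + 2 ≤ n ∨
    ∃ σ : Equiv.Perm (Fin n), σ ∈ alternatingGroup (Fin n) ∧ extendsTo σ f)

/-- `AO_n = AI_n ∩ POI_n`. -/
def AO (n : ℕ) : Set (PT n) := {f | orderPres f ∧ inAI f}

/-- `AM_n = AI_n ∩ PMI_n`. -/
def AM (n : ℕ) : Set (PT n) := {f | isMonotonePT f ∧ inAI f}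

/-- Green's `J`-relation relative to a submonoid-like subset `S` (containing the identity):
`a J b` iff each lies in the two-sided principal ideal of the other. -/
def JRelIn {n : ℕ} (S : Set (PT n)) (a b : PT n) : Prop :=
  (∃ u v, u ∈ S ∧ v ∈ S ∧ a = u * b * v) ∧ (∃ u v, u ∈ S ∧ v ∈ S ∧ b = u * a * v)

section helper

lemma card_pIm {n : ℕ} (h : PT n) (hinj : pInj h) : (pDom h).card = (pIm h).card := by
  classical
  refine Finset.card_bij (fun a ha => (h a).get (by simpa [pDom] using ha)) ?_ ?_ ?_
  · intro a ha
    simp only [pIm, Finset.mem_filter, Finset.mem_univ, true_and]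
    exact ⟨a, (Option.some_get _).symm⟩
  · intro a₁ ha₁ a₂ ha₂ hEq
    have hs1 : (h a₁).isSome := by simpa [pDom] using ha₁
    have hs2 : (h a₂).isSome := by simpa [pDom] using ha₂
    refine hinj a₁ a₂ ((h a₁).get hs1) (Option.some_get hs1).symm ?_
    rw [show (h a₁).get hs1 = (h a₂).get hs2 from hEq]
    exact (Option.some_get hs2).symm
  · intro b hb
    simp only [pIm, Finset.mem_filter, Finset.mem_univ, true_and] at hb
    obtain ⟨x, hx⟩ := hb
    refine ⟨x, by simp [pDom, hx], by simp [hx]⟩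

lemma canonicalPres {n m : ℕ} (h : PT n) (hinj : pInj h) (D I : Finset (Fin n))
    (hdom : pDom h = D) (hi : pIm h = I) (hcD : D.card = m) (hcI : I.card = m)
    (hpres : orderPres h) (i : Fin m) :
    h (D.orderEmbOfFin hcD i) = some (I.orderEmbOfFin hcI i) := by
  classical
  have hsome : ∀ j : Fin m, (h (D.orderEmbOfFin hcD j)).isSome := by
    intro j
    have hmem : D.orderEmbOfFin hcD j ∈ pDom h := by
      rw [hdom]; exact Finset.orderEmbOfFin_mem D hcD j
    simpa [pDom] using hmem
  set F : Fin m → Fin n := fun j => (h (D.orderEmbOfFin hcD j)).get (hsome j) with hFdef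
  have hFh : ∀ j, h (D.orderEmbOfFin hcD j) = some (F j) :=
    fun j => (Option.some_get (hsome j)).symm
  have hmemI : ∀ j, F j ∈ I := by
    intro j
    rw [← hi]
    simp only [pIm, Finset.mem_filter, Finset.mem_univ, true_and]
    exact ⟨_, hFh j⟩
  have hmono : StrictMono F := by
    intro j k hjk
    have hle : F j ≤ F k :=
      hpres _ _ _ _ (hFh j) (hFh k) ((D.orderEmbOfFin hcD).strictMono hjk).le
    refine lt_of_le_of_ne hle fun hEq => ?_
    have := hinj _ _ _ (hFh j) (by rw [hFh k, hEq])
    exact absurd ((D.orderEmbOfFin hcD).injective this) hjk.ne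
  have hF := Finset.orderEmbOfFin_unique hcI hmemI hmono
  rw [hFh i]
  exact congrArg _ (congrFun hF i)

lemma canonicalRev {n m : ℕ} (h : PT n) (hinj : pInj h) (D I : Finset (Fin n))
    (hdom : pDom h = D) (hi : pIm h = I) (hcD : D.card = m) (hcI : I.card = m)
    (hrev : orderRev h) (i : Fin m) :
    h (D.orderEmbOfFin hcD i) = some (I.orderEmbOfFin hcI i.rev) := by
  classical
  have hsome : ∀ j : Fin m, (h (D.orderEmbOfFin hcD j)).isSome := by
    intro j
    have hmem : D.orderEmbOfFin hcD j ∈ pDom h := by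
      rw [hdom]; exact Finset.orderEmbOfFin_mem D hcD j
    simpa [pDom] using hmem
  set F : Fin m → Fin n := fun j => (h (D.orderEmbOfFin hcD (j.rev))).get (hsome j.rev) with hFdef
  have hFh : ∀ j, h (D.orderEmbOfFin hcD j.rev) = some (F j) :=
    fun j => (Option.some_get (hsome j.rev)).symm
  have hmemI : ∀ j, F j ∈ I := by
    intro j
    rw [← hi]
    simp only [pIm, Finset.mem_filter, Finset.mem_univ, true_and]
    exact ⟨_, hFh j⟩
  have hmono : StrictMono F := by
    intro j k hjk
    have hrevlt : k.rev < j.rev := by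
      simp only [Fin.rev_lt_rev]; exact hjk
    have hle : F j ≤ F k :=
      hrev _ _ _ _ (hFh k) (hFh j) ((D.orderEmbOfFin hcD).strictMono hrevlt).le
    refine lt_of_le_of_ne hle fun hEq => ?_
    have := hinj _ _ _ (hFh j) (by rw [hFh k, hEq])
    have := (D.orderEmbOfFin hcD).injective this
    exact absurd (Fin.rev_injective this) hjk.ne
  have hF := Finset.orderEmbOfFin_unique hcI hmemI hmono
  have key : ∀ j : Fin m, h (D.orderEmbOfFin hcD j.rev) = some (I.orderEmbOfFin hcI j) := by
    intro j
    rw [hFh j]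
    exact congrArg _ (congrFun hF j)
  have := key i.rev
  rwa [Fin.rev_rev] at this

lemma extendPerm {n : ℕ} (p : PT n) (hp : pInj p) (d e : Fin n)
    (hdp : pDom p = Finset.univ.erase d)
    (heI : e ∉ pIm p) (hco : ∀ x : Fin n, x ∉ pIm p → x = e) :
    ∃ σ : Equiv.Perm (Fin n), (∀ x, σ x = (p x).getD e) ∧
      ∀ τ : Equiv.Perm (Fin n), extendsTo τ p → τ = σ := by
  classical
  have hdom : ∀ x : Fin n, x ≠ d → ∃ a, p x = some a := by
    intro x hx
    have hm : x ∈ pDom p := by rw [hdp]; simp [hx]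
    rw [pDom, Finset.mem_filter] at hm
    exact Option.isSome_iff_exists.mp hm.2
  have hpd : p d = none := by
    have hd : d ∉ pDom p := by rw [hdp]; simp
    rw [pDom, Finset.mem_filter] at hd
    push_neg at hd
    exact Option.not_isSome_iff_eq_none.mp (hd (Finset.mem_univ d))
  have hmemI : ∀ x a, p x = some a → a ∈ pIm p := by
    intro x a hxa
    simp only [pIm, Finset.mem_filter, Finset.mem_univ, true_and]
    exact ⟨x, hxa⟩
  set s : Fin n → Fin n := fun x => (p x).getD e with hs
  have hinj : Function.Injective s := by
    intro x y hxy
    by_cases hx : x = d <;> by_cases hy : y = d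
    · rw [hx, hy]
    · obtain ⟨b, hb⟩ := hdom y hy
      have heb : e = b := by simpa [s, hx, hpd, hb] using hxy
      exact absurd (heb ▸ hmemI y b hb) heI
    · obtain ⟨a, ha⟩ := hdom x hx
      have hea : e = a := by simpa [s, hy, hpd, ha] using hxy.symm
      exact absurd (hea ▸ hmemI x a ha) heI
    · obtain ⟨a, ha⟩ := hdom x hx
      obtain ⟨b, hb⟩ := hdom y hy
      have hab : a = b := by simpa [s, ha, hb] using hxy
      exact hp x y b (hab ▸ ha) hb
  obtain ⟨σ, hσ⟩ : ∃ σ : Equiv.Perm (Fin n), ∀ x, σ x = s x :=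
    ⟨Equiv.ofBijective s (Finite.injective_iff_bijective.mp hinj), fun x => rfl⟩
  refine ⟨σ, hσ, ?_⟩
  intro τ hτ
  refine Equiv.ext fun x => ?_
  by_cases hx : x = d
  · rw [hx]
    have hτd : τ d ∉ pIm p := by
      intro hmem
      simp only [pIm, Finset.mem_filter, Finset.mem_univ, true_and] at hmem
      obtain ⟨y, hy⟩ := hmem
      have hyd : y ≠ d := by
        intro h'; rw [h', hpd] at hy; exact Option.some_ne_none _ hy.symm
      exact hyd (τ.injective (hτ y _ hy))
    have hσd : σ d = e := by rw [hσ]; simp [s, hpd]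
    rw [hσd]
    exact hco _ hτd
  · obtain ⟨a, ha⟩ := hdom x hx
    rw [hτ x a ha, hσ]
    simp [s, ha]

end helper


open Equiv Equiv.Perm

/-- `Fin m` is equivalent to the non-last elements of `Fin (m+1)`. -/
def finCastEquiv (m : ℕ) : Fin m ≃ {i : Fin (m + 1) // i ≠ Fin.last m} where
  toFun i := ⟨i.castSucc, (Fin.castSucc_lt_last i).ne⟩
  invFun j := j.1.castPred j.2
  left_inv i := by simp
  right_inv j := by simp [Fin.castSucc_castPred]

lemma revPerm_succ_eq (m : ℕ) :
    (Fin.revPerm : Equiv.Perm (Fin (m + 1))) =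
      finRotate (m + 1) * (Fin.revPerm : Equiv.Perm (Fin m)).extendDomain (finCastEquiv m) := by
  ext i
  induction i using Fin.lastCases with
  | last =>
      rw [Equiv.Perm.mul_apply,
        Equiv.Perm.extendDomain_apply_not_subtype _ _ (by simp)]
      simp [finRotate_last]
  | cast j =>
      rw [Equiv.Perm.mul_apply,
        Equiv.Perm.extendDomain_apply_subtype _ (finCastEquiv m) (Fin.castSucc_lt_last j).ne]
      have e1 : ∀ k, ((finCastEquiv m) k : Fin (m + 1)) = k.castSucc := fun _ => rfl
      have e2 : (finCastEquiv m).symm ⟨j.castSucc, (Fin.castSucc_lt_last j).ne⟩ = j := rfl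
      rw [e2, e1]
      simp only [finCastEquiv, Equiv.coe_fn_mk, Equiv.coe_fn_symm_mk, Fin.castPred_castSucc,
        Fin.revPerm_apply, finRotate_succ_apply]
      have hj := j.is_lt
      rw [Fin.val_add]
      simp only [Fin.val_rev, Fin.coe_castSucc]
      have h1 : (1 : Fin (m + 1)).val = 1 := by
        rw [Fin.val_one']; exact Nat.mod_eq_of_lt (by omega)
      rw [h1, Nat.mod_eq_of_lt (by omega)]
      omega

lemma sign_revPerm : ∀ m, Equiv.Perm.sign (Fin.revPerm : Equiv.Perm (Fin m)) = (-1) ^ (m / 2)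
  | 0 => by decide
  | 1 => by decide
  | (m + 2) => by
      have ih := sign_revPerm m
      rw [revPerm_succ_eq (m + 1), map_mul, sign_finRotate, Equiv.Perm.sign_extendDomain,
        revPerm_succ_eq m, map_mul, sign_finRotate, Equiv.Perm.sign_extendDomain, ih,
        ← mul_assoc, ← pow_add]
      have h1 : ((-1 : ℤˣ)) ^ (m + 2 - 1 + (m + 1 - 1)) = -1 := Odd.neg_one_pow ⟨m, by omega⟩
      have h2 : (m + 2) / 2 = m / 2 + 1 := by omega
      rw [h1, h2, pow_succ, mul_comm]

section auxsec
open Equiv Equiv.Perm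

lemma aux_iff {n : ℕ} (hn : 2 ≤ n) (hmod : (n - 1) % 4 = 0 ∨ (n - 1) % 4 = 1)
    (p q : PT n) (hp : pInj p) (hq : pInj q) (d : Fin n)
    (hdp : pDom p = Finset.univ.erase d) (hdq : pDom q = Finset.univ.erase d)
    (hiq : pIm q = pIm p)
    (hpres : orderPres p) (hrev : orderRev q) :
    (∃ σ : Equiv.Perm (Fin n), σ ∈ alternatingGroup (Fin n) ∧ extendsTo σ p) ↔
    (∃ σ : Equiv.Perm (Fin n), σ ∈ alternatingGroup (Fin n) ∧ extendsTo σ q) := by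
  classical
  set m := n - 1 with hm
  set D : Finset (Fin n) := Finset.univ.erase d with hD
  have hcD : D.card = m := by
    rw [hD, Finset.card_erase_of_mem (Finset.mem_univ d)]
    simp [hm]
  set I : Finset (Fin n) := pIm p with hI
  have hcI : I.card = m := by rw [hI, ← card_pIm p hp, hdp]; exact hcD
  have hce : (Finset.univ \ I).card = 1 := by
    rw [Finset.card_sdiff_of_subset (Finset.subset_univ I), hcI]
    simp only [Finset.card_univ, Fintype.card_fin]
    omega
  obtain ⟨e, he⟩ := Finset.card_eq_one.mp hce
  have heI : e ∉ I := by
    have : e ∈ Finset.univ \ I := by rw [he]; exact Finset.mem_singleton_self e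
    exact (Finset.mem_sdiff.mp this).2
  have hco : ∀ x : Fin n, x ∉ I → x = e := by
    intro x hx
    have : x ∈ Finset.univ \ I := Finset.mem_sdiff.mpr ⟨Finset.mem_univ x, hx⟩
    rw [he] at this
    exact Finset.mem_singleton.mp this
  have hp' : ∀ i, p (D.orderEmbOfFin hcD i) = some (I.orderEmbOfFin hcI i) :=
    canonicalPres p hp D I hdp rfl hcD hcI hpres
  have hq' : ∀ i, q (D.orderEmbOfFin hcD i) = some (I.orderEmbOfFin hcI i.rev) :=
    canonicalRev q hq D I hdq hiq hcD hcI hrev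
  have hsurjD : ∀ x : Fin n, x ≠ d → ∃ i, D.orderEmbOfFin hcD i = x := by
    intro x hx
    have hxD : x ∈ D := by rw [hD]; exact Finset.mem_erase.mpr ⟨hx, Finset.mem_univ x⟩
    have hr := Finset.range_orderEmbOfFin D hcD
    have : x ∈ Set.range (D.orderEmbOfFin hcD) := by rw [hr]; exact hxD
    exact this
  obtain ⟨σp, hσp, hup⟩ := extendPerm p hp d e hdp heI hco
  obtain ⟨σq, hσq, huq⟩ := extendPerm q hq d e hdq (by rw [hiq]; exact heI)
    (fun x hx => hco x (by rwa [hiq] at hx))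
  have hextp : extendsTo σp p := fun x a hxa => by rw [hσp, hxa]; rfl
  have hextq : extendsTo σq q := fun x a hxa => by rw [hσq, hxa]; rfl
  have hpd : p d = none := by
    have hd : d ∉ pDom p := by rw [hdp, hD]; simp
    rw [pDom, Finset.mem_filter] at hd
    push_neg at hd
    exact Option.not_isSome_iff_eq_none.mp (hd (Finset.mem_univ d))
  have hqd : q d = none := by
    have hd : d ∉ pDom q := by rw [hdq, hD]; simp
    rw [pDom, Finset.mem_filter] at hd
    push_neg at hd
    exact Option.not_isSome_iff_eq_none.mp (hd (Finset.mem_univ d))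
  -- the reversal permutation on the image set
  set r : Equiv.Perm (Fin n) :=
    (Fin.revPerm : Equiv.Perm (Fin m)).extendDomain (I.orderIsoOfFin hcI).toEquiv with hr
  have hcomp : σq = r * σp := by
    refine Equiv.ext fun x => ?_
    rw [Equiv.Perm.mul_apply]
    by_cases hx : x = d
    · rw [hx]
      have h1 : σp d = e := by rw [hσp, hpd]; rfl
      have h2 : σq d = e := by rw [hσq, hqd]; rfl
      rw [h1, h2, hr, Equiv.Perm.extendDomain_apply_not_subtype _ _ heI]
    · obtain ⟨i, hi⟩ := hsurjD x hx
      rw [← hi]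
      have h1 : σp (D.orderEmbOfFin hcD i) = I.orderEmbOfFin hcI i := by
        rw [hσp, hp' i]; rfl
      have h2 : σq (D.orderEmbOfFin hcD i) = I.orderEmbOfFin hcI i.rev := by
        rw [hσq, hq' i]; rfl
      rw [h1, h2, hr]
      have hmem : I.orderEmbOfFin hcI i ∈ I := Finset.orderEmbOfFin_mem I hcI i
      rw [Equiv.Perm.extendDomain_apply_subtype _ _ hmem]
      have hkey : (⟨I.orderEmbOfFin hcI i, hmem⟩ : {x : Fin n // x ∈ I}) =
          (I.orderIsoOfFin hcI) i :=
        Subtype.ext (Finset.coe_orderIsoOfFin_apply I hcI i).symm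
      have hsymm : (I.orderIsoOfFin hcI).toEquiv.symm
          (⟨I.orderEmbOfFin hcI i, hmem⟩ : {x : Fin n // x ∈ I}) = i := by
        rw [hkey]; simp
      rw [hsymm]
      simp [Finset.coe_orderIsoOfFin_apply]
  have hsign : Equiv.Perm.sign σq = Equiv.Perm.sign σp := by
    rw [hcomp, map_mul]
    have h1 : Equiv.Perm.sign r = 1 := by
      rw [hr, Equiv.Perm.sign_extendDomain, sign_revPerm]
      exact Even.neg_one_pow (Nat.even_iff.mpr (by omega))
    rw [h1, one_mul]
  constructor
  · rintro ⟨σ, hσA, hσe⟩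
    have hσ := hup σ hσe
    refine ⟨σq, ?_, hextq⟩
    rw [Equiv.Perm.mem_alternatingGroup] at hσA ⊢
    rw [hsign, ← hσ]
    exact hσA
  · rintro ⟨σ, hσA, hσe⟩
    have hσ := huq σ hσe
    refine ⟨σp, ?_, hextp⟩
    rw [Equiv.Perm.mem_alternatingGroup] at hσA ⊢
    rw [← hsign, ← hσ]
    exact hσA
end auxsec


/-- for `n ≡ 1, 2 (mod 4)`, a monotone rank-`n-1` partial injection lies in
`AI_n` iff its reverse transformation does. -/
theorem stmt8 {n : ℕ} (hn : 2 ≤ n) (h4 : n % 4 = 1 ∨ n % 4 = 2)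
    (f g : PT n) (hf : pInj f) (hg : pInj g)
    (hmf : isMonotonePT f) (hmg : isMonotonePT g)
    (d : Fin n) (hdf : pDom f = Finset.univ.erase d)
    (hdg : pDom g = pDom f) (him : pIm g = pIm f)
    (hor : orderPres g ↔ ¬ orderPres f) :
    inAI f ↔ inAI g := by
  classical
  have hmod : (n - 1) % 4 = 0 ∨ (n - 1) % 4 = 1 := by omega
  have hdg' : pDom g = Finset.univ.erase d := hdg.trans hdf
  have hrankf : prank f = n - 1 := by
    rw [prank, hdf, Finset.card_erase_of_mem (Finset.mem_univ d)]
    simp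
  have hrankg : prank g = n - 1 := by rw [prank, hdg, ← prank, hrankf]
  have key : (∃ σ : Equiv.Perm (Fin n), σ ∈ alternatingGroup (Fin n) ∧ extendsTo σ f) ↔
      (∃ σ : Equiv.Perm (Fin n), σ ∈ alternatingGroup (Fin n) ∧ extendsTo σ g) := by
    by_cases hfp : orderPres f
    · have hgr : orderRev g := hmg.resolve_left fun h => (hor.mp h) hfp
      exact aux_iff hn hmod f g hf hg d hdf hdg' him hfp hgr
    · have hgp : orderPres g := hor.mpr hfp
      have hfr : orderRev f := hmf.resolve_left hfp
      exact (aux_iff hn hmod g f hg hf d hdg' hdf him.symm hgp hfr).symm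
  constructor
  · rintro ⟨-, h | h⟩
    · exact absurd h (by omega)
    · exact ⟨hg, Or.inr (key.mp h)⟩
  · rintro ⟨-, h | h⟩
    · exact absurd h (by omega)
    · exact ⟨hf, Or.inr (key.mpr h)⟩
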